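/- Let α, β, α_cs ≥ 1 be real parameters and let f_{a,b} denote the Beta(a,b) probability density function on (0,1). For a ∈ (0,1) define ξ̃(a,u) = (1/2)(1 − √((1−a)/(1−u))) and ∂_aξ̃(a,u) = 1/(4√((1−a)(1−u))), and define P̃(a) = ∫_{0}^{a} f_{α_cs, α+β}(u)·[f_{α,β}(ξ̃(a,u)) + f_{α,β}(1 − ξ̃(a,u))]·∂_aξ̃(a,u) du (the posterior density of the modified ambiguity in the three-category case). Then there is a constant K > 0 such that P̃(1−ε) ∼ K·ε^{−1/2} as ε → 0⁺; in particular, P̃(a) → +∞ as a → 1⁻. -/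

import Mathlib

open Filter Topology intervalIntegral

/-- The Beta(a,b) probability density `π^(a-1)(1-π)^(b-1)/B(a,b)` on `(0,1)`,
with `B(a,b) = Γ(a)Γ(b)/Γ(a+b)`. -/
noncomputable def betaPDF (a b : ℝ) (x : ℝ) : ℝ :=
  x ^ (a - 1) * (1 - x) ^ (b - 1) /
    (Real.Gamma a * Real.Gamma b / Real.Gamma (a + b))

/-- `ξ̃(a,u) = ½(1 - √((1-a)/(1-u)))` for the modified ambiguity. -/
noncomputable def xiMod (a u : ℝ) : ℝ :=
  (1 / 2) * (1 - Real.sqrt ((1 - a) / (1 - u)))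

/-- `∂ₐξ̃(a,u) = 1/(4√((1-a)(1-u)))` for the modified ambiguity. -/
noncomputable def dxiMod (a u : ℝ) : ℝ :=
  1 / (4 * Real.sqrt ((1 - a) * (1 - u)))

/-- The posterior density of the modified ambiguity in the three-category case:
`P̃(a) = ∫_0^a f_{α_cs,α+β}(u)·[f_{α,β}(ξ̃) + f_{α,β}(1-ξ̃)]·∂ₐξ̃ du`. -/
noncomputable def ambModPosterior (α β αcs : ℝ) (a : ℝ) : ℝ :=
  ∫ u in (0 : ℝ)..a,
    betaPDF αcs (α + β) u *
      (betaPDF α β (xiMod a u) + betaPDF α β (1 - xiMod a u)) * dxiMod a u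

open MeasureTheory Set

namespace AmbModAux

lemma gammaQ_pos {a b : ℝ} (ha : 0 < a) (hb : 0 < b) :
    0 < Real.Gamma a * Real.Gamma b / Real.Gamma (a + b) :=
  div_pos (mul_pos (Real.Gamma_pos_of_pos ha) (Real.Gamma_pos_of_pos hb))
    (Real.Gamma_pos_of_pos (by linarith))

lemma betaPDF_nonneg {a b x : ℝ} (ha : 0 < a) (hb : 0 < b) (hx : 0 ≤ x) (hx1 : x ≤ 1) :
    0 ≤ betaPDF a b x :=
  div_nonneg (mul_nonneg (Real.rpow_nonneg hx _) (Real.rpow_nonneg (by linarith) _))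
    (gammaQ_pos ha hb).le

lemma betaPDF_pos {a b x : ℝ} (ha : 0 < a) (hb : 0 < b) (hx : 0 < x) (hx1 : x < 1) :
    0 < betaPDF a b x :=
  div_pos (mul_pos (Real.rpow_pos_of_pos hx _) (Real.rpow_pos_of_pos (by linarith) _))
    (gammaQ_pos ha hb)

lemma betaPDF_le {a b x : ℝ} (ha : 1 ≤ a) (hb : 1 ≤ b) (hx : 0 ≤ x) (hx1 : x ≤ 1) :
    betaPDF a b x ≤ 1 / (Real.Gamma a * Real.Gamma b / Real.Gamma (a + b)) := by
  have hq := gammaQ_pos (by linarith : (0:ℝ) < a) (by linarith : (0:ℝ) < b)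
  have h1 : x ^ (a - 1) ≤ 1 := Real.rpow_le_one hx hx1 (by linarith)
  have h2 : (1 - x) ^ (b - 1) ≤ 1 :=
    Real.rpow_le_one (by linarith) (by linarith) (by linarith)
  have hnum : x ^ (a - 1) * (1 - x) ^ (b - 1) ≤ 1 :=
    mul_le_one₀ h1 (Real.rpow_nonneg (by linarith) _) h2
  unfold betaPDF
  exact div_le_div_of_nonneg_right hnum hq.le

lemma betaPDF_continuousAt {a b x : ℝ} (hx : 0 < x) (hx1 : x < 1) :
    ContinuousAt (betaPDF a b) x := by
  unfold betaPDF
  apply ContinuousAt.div_const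
  apply ContinuousAt.mul
  · exact Real.continuousAt_rpow_const x _ (Or.inl hx.ne')
  · exact (Real.continuousAt_rpow_const (1 - x) _ (Or.inl (sub_pos.mpr hx1).ne')).comp
      ((continuous_const.sub continuous_id).continuousAt)

lemma betaPDF_measurable (a b : ℝ) : Measurable (betaPDF a b) := by
  unfold betaPDF
  fun_prop

end AmbModAux

open AmbModAux

/-- For parameters `α, β, α_cs ≥ 1`, the posterior density of the modified ambiguity
satisfies `P̃(1-ε) ∼ K·ε^{-1/2}` as `ε → 0⁺` for some constant `K > 0` (i.e.
`P̃(1-ε)·√ε → K`); in particular `P̃(a) → +∞` as `a → 1⁻`. -/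
theorem ambModPosterior_diverges_at_one
    (α β αcs : ℝ) (hα : 1 ≤ α) (hβ : 1 ≤ β) (hαcs : 1 ≤ αcs) :
    (∃ K : ℝ, 0 < K ∧
        Tendsto (fun ε : ℝ => ambModPosterior α β αcs (1 - ε) * Real.sqrt ε)
          (𝓝[>] (0 : ℝ)) (𝓝 K))
    ∧ Tendsto (ambModPosterior α β αcs) (𝓝[<] (1 : ℝ)) atTop := by
  have hα0 : (0:ℝ) < α := by linarith
  have hβ0 : (0:ℝ) < β := by linarith
  have hαβ : (1:ℝ) ≤ α + β := by linarith
  have hαβ0 : (0:ℝ) < α + β := by linarith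
  set B1 : ℝ := Real.Gamma αcs * Real.Gamma (α + β) / Real.Gamma (αcs + (α + β)) with hB1def
  set B2 : ℝ := Real.Gamma α * Real.Gamma β / Real.Gamma (α + β) with hB2def
  have hB1 : 0 < B1 := gammaQ_pos (by linarith) hαβ0
  have hB2 : 0 < B2 := gammaQ_pos hα0 hβ0
  set C : ℝ := 1 / (2 * B1 * B2) with hCdef
  have hC : 0 < C := by positivity
  set μ : Measure ℝ := volume.restrict (Ioc (0:ℝ) 1) with hμdef
  -- the rescaled integrand and its limit
  set h : ℝ → ℝ → ℝ := fun ε u =>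
    betaPDF αcs (α + β) u *
      (betaPDF α β (xiMod (1 - ε) u) + betaPDF α β (1 - xiMod (1 - ε) u)) *
      (1 / (4 * Real.sqrt (1 - u))) with hhdef
  set hlim : ℝ → ℝ := fun u =>
    betaPDF αcs (α + β) u * (betaPDF α β (1/2) + betaPDF α β (1/2)) *
      (1 / (4 * Real.sqrt (1 - u))) with hlimdef
  set F : ℝ → ℝ → ℝ := fun ε => (Ioc (0:ℝ) (1 - ε)).indicator (h ε) with hFdef
  -- generic bound
  have key_bound : ∀ u : ℝ, 0 < u → u < 1 → ∀ x : ℝ, 0 ≤ x → x ≤ 1 →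
      betaPDF αcs (α + β) u * (betaPDF α β x + betaPDF α β (1 - x)) *
        (1 / (4 * Real.sqrt (1 - u))) ≤ C := by
    intro u hu0 hu1 x hx0 hx1
    have hsu : 0 < Real.sqrt (1 - u) := Real.sqrt_pos.mpr (by linarith)
    have hb1 : betaPDF αcs (α + β) u ≤ Real.sqrt (1 - u) / B1 := by
      have h1 : u ^ (αcs - 1) ≤ 1 := Real.rpow_le_one hu0.le hu1.le (by linarith)
      have h2 : (1 - u) ^ (α + β - 1) ≤ (1 - u) ^ ((1:ℝ)/2) :=
        Real.rpow_le_rpow_of_exponent_ge (by linarith) (by linarith) (by linarith)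
      have h3 : (1 - u) ^ ((1:ℝ)/2) = Real.sqrt (1 - u) := (Real.sqrt_eq_rpow _).symm
      have hnum : u ^ (αcs - 1) * (1 - u) ^ (α + β - 1) ≤ Real.sqrt (1 - u) := by
        calc u ^ (αcs - 1) * (1 - u) ^ (α + β - 1)
            ≤ 1 * ((1 - u) ^ ((1:ℝ)/2)) :=
              mul_le_mul h1 h2 (Real.rpow_nonneg (by linarith) _) zero_le_one
          _ = Real.sqrt (1 - u) := by rw [one_mul, h3]
      unfold betaPDF
      exact div_le_div_of_nonneg_right hnum hB1.le
    have hb2 : betaPDF α β x + betaPDF α β (1 - x) ≤ 2 / B2 := by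
      have e1 := betaPDF_le hα hβ hx0 hx1
      have e2 := betaPDF_le hα hβ (by linarith : (0:ℝ) ≤ 1 - x) (by linarith : (1:ℝ) - x ≤ 1)
      have : (2:ℝ) / B2 = 1 / B2 + 1 / B2 := by ring
      rw [this]; rw [← hB2def] at e1 e2; linarith
    have hn1 : 0 ≤ betaPDF αcs (α + β) u := betaPDF_nonneg (by linarith) hαβ0 hu0.le hu1.le
    have hn2 : 0 ≤ betaPDF α β x + betaPDF α β (1 - x) :=
      add_nonneg (betaPDF_nonneg hα0 hβ0 hx0 hx1)
        (betaPDF_nonneg hα0 hβ0 (by linarith) (by linarith))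
    have hn3 : (0:ℝ) ≤ 1 / (4 * Real.sqrt (1 - u)) := by positivity
    calc betaPDF αcs (α + β) u * (betaPDF α β x + betaPDF α β (1 - x)) *
          (1 / (4 * Real.sqrt (1 - u)))
        ≤ (Real.sqrt (1 - u) / B1) * (2 / B2) * (1 / (4 * Real.sqrt (1 - u))) := by
          apply mul_le_mul_of_nonneg_right _ hn3
          exact mul_le_mul hb1 hb2 hn2 (by positivity)
      _ = C := by
          rw [hCdef]; field_simp; ring
  -- ξ̃ stays in [0,1] on the relevant range
  have hxi_mem : ∀ ε : ℝ, 0 < ε → ∀ u : ℝ, 0 < u → u ≤ 1 - ε →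
      0 ≤ xiMod (1 - ε) u ∧ xiMod (1 - ε) u ≤ 1 := by
    intro ε hε u hu0 hu1
    have h1u : 0 < 1 - u := by linarith
    have hr0 : 0 ≤ (1 - (1 - ε)) / (1 - u) := by
      apply div_nonneg (by linarith) h1u.le
    have hr1 : (1 - (1 - ε)) / (1 - u) ≤ 1 := by
      rw [div_le_one h1u]; linarith
    have hs0 : 0 ≤ Real.sqrt ((1 - (1 - ε)) / (1 - u)) := Real.sqrt_nonneg _
    have hs1 : Real.sqrt ((1 - (1 - ε)) / (1 - u)) ≤ 1 := Real.sqrt_le_one.mpr hr1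
    constructor
    · simp only [xiMod]; nlinarith
    · simp only [xiMod]; nlinarith
  -- nonnegativity of h on the relevant range
  have key_nonneg : ∀ ε : ℝ, 0 < ε → ∀ u : ℝ, 0 < u → u ≤ 1 - ε → 0 ≤ h ε u := by
    intro ε hε u hu0 hu1
    obtain ⟨hx0, hx1⟩ := hxi_mem ε hε u hu0 hu1
    have hn1 : 0 ≤ betaPDF αcs (α + β) u :=
      betaPDF_nonneg (by linarith) hαβ0 hu0.le (by linarith)
    have hn2 : 0 ≤ betaPDF α β (xiMod (1 - ε) u) + betaPDF α β (1 - xiMod (1 - ε) u) :=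
      add_nonneg (betaPDF_nonneg hα0 hβ0 hx0 hx1)
        (betaPDF_nonneg hα0 hβ0 (by linarith) (by linarith))
    have hn3 : (0:ℝ) ≤ 1 / (4 * Real.sqrt (1 - u)) := by positivity
    exact mul_nonneg (mul_nonneg hn1 hn2) hn3
  -- measurability of h ε
  have h_meas : ∀ ε : ℝ, Measurable (h ε) := by
    intro ε
    apply Measurable.mul
    apply Measurable.mul
    · exact (betaPDF_measurable _ _)
    · apply Measurable.add
      · apply (betaPDF_measurable α β).comp
        unfold xiMod
        fun_prop
      · apply (betaPDF_measurable α β).comp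
        apply measurable_const.sub
        unfold xiMod
        fun_prop
    · fun_prop
  -- the key rewriting of the rescaled posterior as a fixed-domain integral
  have eqA : ∀ ε : ℝ, ε ∈ Ioo (0:ℝ) 1 →
      ambModPosterior α β αcs (1 - ε) * Real.sqrt ε = ∫ u, F ε u ∂μ := by
    intro ε ⟨hε0, hε1⟩
    have hle : (0:ℝ) ≤ 1 - ε := by linarith
    have hsε : 0 < Real.sqrt ε := Real.sqrt_pos.mpr hε0
    calc ambModPosterior α β αcs (1 - ε) * Real.sqrt ε
        = (∫ u in Ioc (0:ℝ) (1 - ε),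
            betaPDF αcs (α + β) u *
              (betaPDF α β (xiMod (1 - ε) u) + betaPDF α β (1 - xiMod (1 - ε) u)) *
              dxiMod (1 - ε) u) * Real.sqrt ε := by
          rw [ambModPosterior, intervalIntegral.integral_of_le hle]
      _ = ∫ u in Ioc (0:ℝ) (1 - ε),
            betaPDF αcs (α + β) u *
              (betaPDF α β (xiMod (1 - ε) u) + betaPDF α β (1 - xiMod (1 - ε) u)) *
              dxiMod (1 - ε) u * Real.sqrt ε := (MeasureTheory.integral_mul_const _ _).symm
      _ = ∫ u in Ioc (0:ℝ) (1 - ε), h ε u := by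
          apply setIntegral_congr_fun measurableSet_Ioc
          intro u hu
          obtain ⟨hu0, hu1⟩ := hu
          have h1u : (0:ℝ) < 1 - u := by linarith
          have hsu : 0 < Real.sqrt (1 - u) := Real.sqrt_pos.mpr h1u
          have hd : dxiMod (1 - ε) u * Real.sqrt ε = 1 / (4 * Real.sqrt (1 - u)) := by
            simp only [dxiMod]
            rw [show (1:ℝ) - (1 - ε) = ε by ring, Real.sqrt_mul hε0.le]
            field_simp
          simp only [h, mul_assoc]
          rw [hd]
      _ = ∫ u, F ε u ∂μ := by
          rw [hFdef]
          simp only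
          rw [MeasureTheory.integral_indicator measurableSet_Ioc, hμdef,
            Measure.restrict_restrict measurableSet_Ioc,
            inter_eq_self_of_subset_left (Ioc_subset_Ioc_right (by linarith))]
  set K : ℝ := ∫ u, hlim u ∂μ with hKdef
  -- dominated convergence
  have hmainT : Tendsto (fun ε => ∫ u, F ε u ∂μ) (𝓝[>] (0:ℝ)) (𝓝 K) := by
    apply MeasureTheory.tendsto_integral_filter_of_dominated_convergence (bound := fun _ => C)
    · exact Filter.Eventually.of_forall fun ε =>
        ((h_meas ε).indicator measurableSet_Ioc).aestronglyMeasurable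
    · filter_upwards [Ioo_mem_nhdsGT
        (one_pos : (0:ℝ) < 1)] with ε hε
      apply Filter.Eventually.of_forall
      intro u
      rw [hFdef]
      simp only
      by_cases hm : u ∈ Ioc (0:ℝ) (1 - ε)
      · rw [Set.indicator_of_mem hm]
        obtain ⟨hu0, hu1⟩ := hm
        rw [Real.norm_eq_abs, abs_of_nonneg (key_nonneg ε hε.1 u hu0 hu1)]
        obtain ⟨hx0, hx1⟩ := hxi_mem ε hε.1 u hu0 hu1
        exact key_bound u hu0 (by linarith [hε.1]) _ hx0 hx1
      · rw [Set.indicator_of_notMem hm]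
        simpa using hC.le
    · rw [hμdef]
      exact integrableOn_const measure_Ioc_lt_top.ne
    · have hae : ∀ᵐ u ∂μ, u ∈ Ioo (0:ℝ) 1 := by
        rw [hμdef]
        have h1 : ∀ᵐ u ∂(volume.restrict (Ioc (0:ℝ) 1)), u ∈ Ioc (0:ℝ) 1 :=
          ae_restrict_mem measurableSet_Ioc
        have h2 : ∀ᵐ u : ℝ ∂(volume.restrict (Ioc (0:ℝ) 1)), u ≠ 1 := by
          refine ae_restrict_of_ae ?_
          rw [ae_iff]
          have he : {u : ℝ | ¬ u ≠ 1} = {1} := by ext; simp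
          rw [he]
          exact measure_singleton 1
        filter_upwards [h1, h2] with u hu hne
        exact ⟨hu.1, lt_of_le_of_ne hu.2 hne⟩
      filter_upwards [hae] with u hu
      obtain ⟨hu0, hu1⟩ := hu
      have h1u : (0:ℝ) < 1 - u := by linarith
      have hev : (fun ε => h ε u) =ᶠ[𝓝[>] (0:ℝ)] fun ε => F ε u := by
        filter_upwards [Ioo_mem_nhdsGT
          h1u] with ε hε
        rw [hFdef]
        simp only
        have hmem : u ∈ Ioc (0:ℝ) (1 - ε) := ⟨hu0, by linarith [hε.2]⟩
        rw [Set.indicator_of_mem hmem]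
      have hxi : Tendsto (fun ε : ℝ => xiMod (1 - ε) u) (𝓝[>] (0:ℝ)) (𝓝 (1/2)) := by
        have hc : Continuous fun ε : ℝ =>
            (1/2 : ℝ) * (1 - Real.sqrt ((1 - (1 - ε)) / (1 - u))) := by
          apply continuous_const.mul
          apply continuous_const.sub
          apply Real.continuous_sqrt.comp
          exact (continuous_const.sub (continuous_const.sub continuous_id)).div_const _
        have ht := hc.tendsto 0
        have hval : (1/2 : ℝ) * (1 - Real.sqrt ((1 - (1 - (0:ℝ))) / (1 - u))) = 1/2 := by
          norm_num
        rw [hval] at ht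
        simp only [xiMod]
        exact ht.mono_left nhdsWithin_le_nhds
      have hT1 : Tendsto (fun ε : ℝ => betaPDF α β (xiMod (1 - ε) u)) (𝓝[>] (0:ℝ))
          (𝓝 (betaPDF α β (1/2))) :=
        (betaPDF_continuousAt (by norm_num) (by norm_num)).tendsto.comp hxi
      have hT2 : Tendsto (fun ε : ℝ => betaPDF α β (1 - xiMod (1 - ε) u)) (𝓝[>] (0:ℝ))
          (𝓝 (betaPDF α β (1/2))) := by
        have hs : Tendsto (fun ε : ℝ => 1 - xiMod (1 - ε) u) (𝓝[>] (0:ℝ)) (𝓝 ((1:ℝ)/2)) := by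
          have := tendsto_const_nhds (x := (1:ℝ)) (f := 𝓝[>] (0:ℝ)) |>.sub hxi
          norm_num at this
          exact this
        exact (betaPDF_continuousAt (by norm_num) (by norm_num)).tendsto.comp hs
      have hTh : Tendsto (fun ε => h ε u) (𝓝[>] (0:ℝ)) (𝓝 (hlim u)) := by
        rw [hhdef, hlimdef]
        simp only
        exact (tendsto_const_nhds.mul (hT1.add hT2)).mul tendsto_const_nhds
      exact hTh.congr' hev
  -- nonnegativity / integrability of the limit function
  have hlim_nonneg_on : ∀ u ∈ Ioc (0:ℝ) 1, 0 ≤ hlim u := by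
    intro u hu
    obtain ⟨hu0, hu1⟩ := hu
    have hn1 : 0 ≤ betaPDF αcs (α + β) u := betaPDF_nonneg (by linarith) hαβ0 hu0.le hu1
    have hn2 : 0 ≤ betaPDF α β (1/2) := betaPDF_nonneg hα0 hβ0 (by norm_num) (by norm_num)
    have hn3 : (0:ℝ) ≤ 1 / (4 * Real.sqrt (1 - u)) := by positivity
    exact mul_nonneg (mul_nonneg hn1 (by linarith)) hn3
  have hlim_meas : Measurable hlim := by
    rw [hlimdef]
    exact ((betaPDF_measurable _ _).mul measurable_const).mul (by fun_prop)
  have hint : IntegrableOn hlim (Ioc (0:ℝ) 1) := by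
    refine Integrable.mono' (g := fun _ => C)
      (integrableOn_const measure_Ioc_lt_top.ne)
      hlim_meas.aestronglyMeasurable ?_
    refine (ae_restrict_iff' measurableSet_Ioc).mpr (Filter.Eventually.of_forall fun u hu => ?_)
    rw [Real.norm_eq_abs, abs_of_nonneg (hlim_nonneg_on u hu)]
    by_cases h1 : u < 1
    · have hkb := key_bound u hu.1 h1 (1/2) (by norm_num) (by norm_num)
      rw [show (1:ℝ) - 1/2 = 1/2 by norm_num] at hkb
      exact hkb
    · have hu1 : u = 1 := le_antisymm hu.2 (not_lt.mp h1)
      subst hu1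
      rw [hlimdef]
      simp only [sub_self, Real.sqrt_zero, mul_zero, div_zero, mul_zero]
      exact hC.le
  have hKpos : 0 < K := by
    have hae0 : 0 ≤ᶠ[ae (volume.restrict (Ioc (0:ℝ) 1))] hlim :=
      (ae_restrict_iff' measurableSet_Ioc).mpr
        (Filter.Eventually.of_forall fun u hu => hlim_nonneg_on u hu)
    rw [hKdef, hμdef, MeasureTheory.setIntegral_pos_iff_support_of_nonneg_ae hae0 hint]
    have hsub : Ioo (0:ℝ) 1 ⊆ Function.support hlim ∩ Ioc (0:ℝ) 1 := by
      intro u hu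
      obtain ⟨hu0, hu1⟩ := hu
      refine ⟨?_, hu0, hu1.le⟩
      have hp1 : 0 < betaPDF αcs (α + β) u := betaPDF_pos (by linarith) hαβ0 hu0 hu1
      have hp2 : 0 < betaPDF α β (1/2) := betaPDF_pos hα0 hβ0 (by norm_num) (by norm_num)
      have hsu : 0 < Real.sqrt (1 - u) := Real.sqrt_pos.mpr (by linarith)
      have hp3 : (0:ℝ) < 1 / (4 * Real.sqrt (1 - u)) := by positivity
      have : 0 < hlim u := mul_pos (mul_pos hp1 (by linarith)) hp3
      exact this.ne'
    calc (0:ENNReal) < volume (Ioo (0:ℝ) 1) := by rw [Real.volume_Ioo]; norm_num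
      _ ≤ volume (Function.support hlim ∩ Ioc (0:ℝ) 1) := measure_mono hsub
  -- first conclusion
  have htendA : Tendsto (fun ε : ℝ => ambModPosterior α β αcs (1 - ε) * Real.sqrt ε)
      (𝓝[>] (0:ℝ)) (𝓝 K) := by
    apply hmainT.congr'
    filter_upwards [Ioo_mem_nhdsGT
      (one_pos : (0:ℝ) < 1)] with ε hε
    exact (eqA ε hε).symm
  -- second conclusion
  have hsqrtT : Tendsto (fun ε : ℝ => Real.sqrt ε) (𝓝[>] (0:ℝ)) (𝓝[>] (0:ℝ)) := by
    apply tendsto_nhdsWithin_of_tendsto_nhds_of_eventually_within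
    · have := Real.continuous_sqrt.tendsto 0
      rw [Real.sqrt_zero] at this
      exact this.mono_left nhdsWithin_le_nhds
    · filter_upwards [self_mem_nhdsWithin] with ε hε
      exact Real.sqrt_pos.mpr (mem_Ioi.mp hε)
  have hinv : Tendsto (fun ε : ℝ => (Real.sqrt ε)⁻¹) (𝓝[>] (0:ℝ)) atTop :=
    hsqrtT.inv_tendsto_nhdsGT_zero
  have h2 : Tendsto (fun ε : ℝ => ambModPosterior α β αcs (1 - ε)) (𝓝[>] (0:ℝ)) atTop := by
    have hmul := Tendsto.pos_mul_atTop hKpos htendA hinv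
    apply hmul.congr'
    filter_upwards [self_mem_nhdsWithin] with ε hε
    have hsε : Real.sqrt ε ≠ 0 := (Real.sqrt_pos.mpr hε).ne'
    rw [mul_assoc, mul_inv_cancel₀ hsε, mul_one]
  have hmap : Tendsto (fun a : ℝ => 1 - a) (𝓝[<] (1:ℝ)) (𝓝[>] (0:ℝ)) := by
    apply tendsto_nhdsWithin_of_tendsto_nhds_of_eventually_within
    · have : Tendsto (fun a : ℝ => 1 - a) (𝓝 1) (𝓝 (1 - 1)) :=
        (continuous_const.sub continuous_id).tendsto 1
      norm_num at this
      exact this.mono_left nhdsWithin_le_nhds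
    · filter_upwards [self_mem_nhdsWithin] with a ha
      exact sub_pos.mpr (mem_Iio.mp ha)
  refine ⟨⟨K, hKpos, htendA⟩, ?_⟩
  have hcomp := h2.comp hmap
  apply hcomp.congr
  intro a
  simp [Function.comp]
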